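/- Let k be even and π a pair partition of {1,…,k} with a block {i,j}, i < j, which is crossed by another block {i',j'} (i.e. i < i' < j and either j' < i or j < j'). Define S_n(π,i,j) := {(p_1,…,p_k) ∈ S_n(π) : (p_i,p_{i+1}) = (p_j,p_{j+1}) or (p_i,p_{i+1}) = (p_{j+1},p_j)}. Then #S_n(π,i,j) ≤ C·n^{k/2}, hence #S_n(π,i,j) = o(n^{k/2+1}) as n → ∞. -/

import Mathlib

open Finset Filter

/-- `i ∼_π j`: `i` and `j` lie in the same block of the partition `π`. -/
def sameBlock {k : ℕ} (P : Finpartition (Finset.univ : Finset (Fin k))) (i j : Fin k) : Prop :=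
  ∃ b ∈ P.parts, i ∈ b ∧ j ∈ b

/-- `S_n(π)`: tuples `(p 1, …, p k) ∈ {1,…,n}^k` with
`p i + p (i+1) = p j + p (j+1) ↔ i ∼_π j` (indices cyclic). -/
def consistentSet (k n : ℕ) [NeZero k] (P : Finpartition (Finset.univ : Finset (Fin k))) :
    Set (Fin k → ℕ) :=
  {p | (∀ i, 1 ≤ p i ∧ p i ≤ n) ∧
    ∀ i j : Fin k, p i + p (i + 1) = p j + p (j + 1) ↔ sameBlock P i j}

/-- `S_n(π, i, j)`: elements of `S_n(π)` with `P_i = P_j` or `P_i = P̄_j`, where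
`P_l = (p l, p (l+1))`. -/
def matchedSet (k n : ℕ) [NeZero k] (P : Finpartition (Finset.univ : Finset (Fin k)))
    (i j : Fin k) : Set (Fin k → ℕ) :=
  {p | p ∈ consistentSet k n P ∧
    ((p i = p j ∧ p (i + 1) = p (j + 1)) ∨ (p i = p (j + 1) ∧ p (i + 1) = p j))}

open Fin.NatCast

lemma tele_aux {k : ℕ} [NeZero k] (p q : Fin k → ℕ) (i0 : Fin k) (h0 : p i0 = q i0)
    (hs : ∀ l, p l + p (l + 1) = q l + q (l + 1)) : p = q := by
  have key : ∀ r : ℕ, p (i0 + (r : Fin k)) = q (i0 + (r : Fin k)) := by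
    intro r
    induction r with
    | zero => simpa using h0
    | succ r ih =>
      have h := hs (i0 + (r : Fin k))
      have h2 : p (i0 + (r : Fin k) + 1) = q (i0 + (r : Fin k) + 1) := by omega
      have hc : ((r + 1 : ℕ) : Fin k) = (r : Fin k) + 1 := by push_cast; ring
      rw [hc, ← add_assoc]
      exact h2
  funext x
  have h := key (x - i0).val
  rwa [Fin.cast_val_eq_self, show i0 + (x - i0) = x from by abel] at h

lemma altsum_aux {k : ℕ} [NeZero k] (p : Fin k → ℕ) (i0 : Fin k) (t : ℕ) :
    (-1 : ℤ) ^ t * (p (i0 + (t : Fin k)) : ℤ) =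
      (p i0 : ℤ) + ∑ r ∈ Finset.range t, (-1 : ℤ) ^ (r + 1) *
        ((p (i0 + (r : Fin k)) : ℤ) + (p (i0 + (r : Fin k) + 1) : ℤ)) := by
  induction t with
  | zero => simp
  | succ t ih =>
    have hc : ((t + 1 : ℕ) : Fin k) = (t : Fin k) + 1 := by push_cast; ring
    rw [hc, ← add_assoc, Finset.sum_range_succ]
    linear_combination ih

set_option maxHeartbeats 1000000 in
/-- Crossing property: if the block `{i,j}` of the pair partition `π` is crossed by a
block `{i',j'}` (i.e. `i < i' < j` and `j' < i` or `j < j'`), then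
`#S_n(π,i,j) ≤ C n^(k/2)`, hence `#S_n(π,i,j) = o(n^(k/2+1))`. -/
theorem stmt10 (m : ℕ) [NeZero (2 * m)]
    (P : Finpartition (Finset.univ : Finset (Fin (2 * m))))
    (hpair : ∀ b ∈ P.parts, b.card = 2)
    (i j i' j' : Fin (2 * m)) (hij : i < j)
    (hb : ({i, j} : Finset (Fin (2 * m))) ∈ P.parts)
    (hb' : ({i', j'} : Finset (Fin (2 * m))) ∈ P.parts)
    (hcross : i < i' ∧ i' < j ∧ (j' < i ∨ j < j')) :
    (∃ C : ℝ, ∀ n : ℕ, ((matchedSet (2 * m) n P i j).ncard : ℝ) ≤ C * (n : ℝ) ^ m) ∧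
      Tendsto (fun n : ℕ => ((matchedSet (2 * m) n P i j).ncard : ℝ) / (n : ℝ) ^ (m + 1))
        atTop (nhds 0) := by
  classical
  obtain ⟨hii', hi'j, hj'cross⟩ := hcross
  have hk : 0 < 2 * m := Nat.pos_of_ne_zero (NeZero.ne _)
  have hm : 1 ≤ m := by omega
  -- value form of the order hypotheses
  have hij_v : i.val < j.val := hij
  have hii'_v : i.val < i'.val := hii'
  have hi'j_v : i'.val < j.val := hi'j
  have hj'_v : j'.val < i.val ∨ j.val < j'.val := by
    rcases hj'cross with h | h
    · exact Or.inl h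
    · exact Or.inr h
  -- representative of the block of `l`
  have hpartmem : ∀ l, P.part l ∈ P.parts := fun l => P.part_mem.mpr (Finset.mem_univ l)
  have hmem : ∀ l, l ∈ P.part l := fun l => P.mem_part (Finset.mem_univ l)
  set rep : Fin (2 * m) → Fin (2 * m) :=
    fun l => (P.part l).min' (P.nonempty_of_mem_parts (hpartmem l)) with hrepdef
  have hrepmem : ∀ l, rep l ∈ P.part l := fun l => Finset.min'_mem _ _
  have hsameRep : ∀ l, sameBlock P l (rep l) := fun l => ⟨P.part l, hpartmem l, hmem l, hrepmem l⟩
  have hsame_part : ∀ a b : Fin (2 * m), sameBlock P a b → P.part a = P.part b := by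
    rintro a b ⟨c, hc, ha, hb2⟩
    rw [P.part_eq_of_mem hc ha, P.part_eq_of_mem hc hb2]
  have hrep_congr : ∀ a b, sameBlock P a b → rep a = rep b := by
    intro a b hab
    have h := hsame_part a b hab
    apply le_antisymm
    · exact Finset.min'_le _ _ (by rw [h]; exact hrepmem b)
    · exact Finset.min'_le _ _ (by rw [← h]; exact hrepmem a)
  have hrep_same : ∀ a b, rep a = rep b → sameBlock P a b := by
    intro a b hab
    have hparts : P.part a = P.part b :=
      P.eq_of_mem_parts (hpartmem a) (hpartmem b) (hrepmem a) (by rw [hab]; exact hrepmem b)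
    exact ⟨P.part a, hpartmem a, hmem a, by rw [hparts]; exact hmem b⟩
  have hparti' : P.part i' = {i', j'} := P.part_eq_of_mem hb' (by simp)
  -- the set of representatives
  set R : Finset (Fin (2 * m)) := Finset.image rep Finset.univ with hRdef
  have hRcard : R.card ≤ m := by
    have h1 : (Finset.univ : Finset (Fin (2 * m))).card =
        ∑ x ∈ R, (Finset.univ.filter (fun l => rep l = x)).card :=
      Finset.card_eq_sum_card_fiberwise (fun l _ => Finset.mem_image_of_mem rep (Finset.mem_univ l))
    have h2 : ∀ x ∈ R, 2 ≤ (Finset.univ.filter (fun l => rep l = x)).card := by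
      intro x hx
      obtain ⟨l0, -, rfl⟩ := Finset.mem_image.mp hx
      have hsub : P.part l0 ⊆ Finset.univ.filter (fun l => rep l = rep l0) := by
        intro y hy
        simp only [Finset.mem_filter]
        exact ⟨Finset.mem_univ y, hrep_congr y l0 ⟨P.part l0, hpartmem l0, hy, hmem l0⟩⟩
      calc 2 = (P.part l0).card := (hpair _ (hpartmem l0)).symm
        _ ≤ _ := Finset.card_le_card hsub
    have h3 : 2 * R.card ≤ 2 * m := by
      calc 2 * R.card = ∑ _x ∈ R, 2 := by rw [Finset.sum_const, smul_eq_mul, mul_comm]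
        _ ≤ ∑ x ∈ R, (Finset.univ.filter (fun l => rep l = x)).card := Finset.sum_le_sum h2
        _ = (Finset.univ : Finset (Fin (2 * m))).card := h1.symm
        _ = 2 * m := by simp
    omega
  -- index arithmetic
  set t : ℕ := j.val - i.val with htdef
  set r' : ℕ := i'.val - i.val with hr'def
  have ht1 : 1 ≤ t := by omega
  have hr'1 : 1 ≤ r' := by omega
  have hr't : r' < t := by omega
  have hidx : ∀ r : ℕ, r ≤ t → (i + (r : Fin (2 * m))).val = i.val + r := by
    intro r hr
    have hjk := j.isLt
    have hrk : i.val + r < 2 * m := by omega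
    have h5 : r % (2 * m) = r := Nat.mod_eq_of_lt (by omega)
    rw [Fin.val_add, Fin.val_natCast, h5, Nat.mod_eq_of_lt hrk]
  have hidxt : i + (t : Fin (2 * m)) = j := by
    apply Fin.ext
    rw [hidx t le_rfl]
    omega
  have hidxr' : i + (r' : Fin (2 * m)) = i' := by
    apply Fin.ext
    rw [hidx r' (le_of_lt hr't)]
    omega
  have hrep_idx : ∀ r : ℕ, r < t → rep (i + (r : Fin (2 * m))) = rep i' → r = r' := by
    intro r hr hrepEq
    have hsb := hrep_same _ _ hrepEq
    have hpp : P.part (i + (r : Fin (2 * m))) = P.part i' := hsame_part _ _ hsb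
    have hmm : i + (r : Fin (2 * m)) ∈ P.part i' := by rw [← hpp]; exact hmem _
    rw [hparti'] at hmm
    have hv := hidx r (le_of_lt hr)
    rcases Finset.mem_insert.mp hmm with h | h
    · have := congrArg Fin.val h
      omega
    · have := congrArg Fin.val (Finset.mem_singleton.mp h)
      omega
  -- the main counting lemma: a linear relation with nonzero coefficient at `r'`
  -- forces `ncard ≤ (n+1)(2n+1)^(m-1)`
  have count : ∀ (n : ℕ) (M : Set (Fin (2 * m) → ℕ)) (c : ℤ) (d : ℕ → ℤ),
      (∀ p ∈ M, p ∈ consistentSet (2 * m) n P) →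
      (∀ p ∈ M, c * (p i : ℤ) = ∑ r ∈ Finset.range t, d r *
        ((p (i + (r : Fin (2 * m))) : ℤ) + (p (i + (r : Fin (2 * m)) + 1) : ℤ))) →
      d r' ≠ 0 →
      M.Finite ∧ M.ncard ≤ (n + 1) * (2 * n + 1) ^ (m - 1) := by
    intro n M c d hMc hrel hd
    set E : Finset (Fin (2 * m)) := R.erase (rep i') with hEdef
    set f : (Fin (2 * m) → ℕ) → (Fin (n + 1) × (E → Fin (2 * n + 1))) :=
      fun p => (⟨p i % (n + 1), Nat.mod_lt _ (by omega)⟩,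
                fun x => ⟨(p x.1 + p (x.1 + 1)) % (2 * n + 1), Nat.mod_lt _ (by omega)⟩)
      with hfdef
    have hinj : Set.InjOn f M := by
      intro p hp q hq hfq
      have hpc := hMc p hp
      have hqc := hMc q hq
      have hpb : ∀ l, p l ≤ n := fun l => (hpc.1 l).2
      have hqb : ∀ l, q l ≤ n := fun l => (hqc.1 l).2
      have h1 : p i = q i := by
        have h := congrArg (fun z => (z.1 : ℕ)) hfq
        simpa [hfdef, Nat.mod_eq_of_lt (show p i < n + 1 by have := hpb i; omega),
          Nat.mod_eq_of_lt (show q i < n + 1 by have := hqb i; omega)] using h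
      have h2 : ∀ x : Fin (2 * m), ∀ hx : x ∈ E, p x + p (x + 1) = q x + q (x + 1) := by
        intro x hx
        have h := congrArg (fun z => (z.2 ⟨x, hx⟩ : ℕ)) hfq
        have hpbd : p x + p (x + 1) < 2 * n + 1 := by
          have := hpb x; have := hpb (x + 1); omega
        have hqbd : q x + q (x + 1) < 2 * n + 1 := by
          have := hqb x; have := hqb (x + 1); omega
        simpa [hfdef, Nat.mod_eq_of_lt hpbd, Nat.mod_eq_of_lt hqbd] using h
      have hsp : ∀ l, p l + p (l + 1) = p (rep l) + p (rep l + 1) :=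
        fun l => (hpc.2 l (rep l)).mpr (hsameRep l)
      have hsq : ∀ l, q l + q (l + 1) = q (rep l) + q (rep l + 1) :=
        fun l => (hqc.2 l (rep l)).mpr (hsameRep l)
      have hstep1 : ∀ r : ℕ, r < t → r ≠ r' →
          p (i + (r : Fin (2 * m))) + p (i + (r : Fin (2 * m)) + 1) =
          q (i + (r : Fin (2 * m))) + q (i + (r : Fin (2 * m)) + 1) := by
        intro r hr hne
        have hrepne : rep (i + (r : Fin (2 * m))) ≠ rep i' := fun h => hne (hrep_idx r hr h)
        have hmemE : rep (i + (r : Fin (2 * m))) ∈ E :=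
          Finset.mem_erase.mpr ⟨hrepne, Finset.mem_image_of_mem rep (Finset.mem_univ _)⟩
        calc p (i + (r : Fin (2 * m))) + p (i + (r : Fin (2 * m)) + 1)
            = p (rep (i + (r : Fin (2 * m)))) + p (rep (i + (r : Fin (2 * m))) + 1) := hsp _
          _ = q (rep (i + (r : Fin (2 * m)))) + q (rep (i + (r : Fin (2 * m))) + 1) := h2 _ hmemE
          _ = q (i + (r : Fin (2 * m))) + q (i + (r : Fin (2 * m)) + 1) := (hsq _).symm
      have hsi' : p i' + p (i' + 1) = q i' + q (i' + 1) := by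
        have hp' := hrel p hp
        have hq' := hrel q hq
        rw [← Finset.add_sum_erase _ _ (Finset.mem_range.mpr hr't)] at hp' hq'
        have hsum_eq : ∑ r ∈ (Finset.range t).erase r', d r *
              ((p (i + (r : Fin (2 * m))) : ℤ) + (p (i + (r : Fin (2 * m)) + 1) : ℤ)) =
            ∑ r ∈ (Finset.range t).erase r', d r *
              ((q (i + (r : Fin (2 * m))) : ℤ) + (q (i + (r : Fin (2 * m)) + 1) : ℤ)) := by
          apply Finset.sum_congr rfl
          intro r hr
          obtain ⟨hne, hrr⟩ := Finset.mem_erase.mp hr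
          have hh := hstep1 r (Finset.mem_range.mp hrr) hne
          have hh' : (p (i + (r : Fin (2 * m))) : ℤ) + (p (i + (r : Fin (2 * m)) + 1) : ℤ) =
              (q (i + (r : Fin (2 * m))) : ℤ) + (q (i + (r : Fin (2 * m)) + 1) : ℤ) := by
            exact_mod_cast hh
          rw [hh']
        have hkey : d r' * ((p (i + (r' : Fin (2 * m))) : ℤ) + (p (i + (r' : Fin (2 * m)) + 1) : ℤ)) =
            d r' * ((q (i + (r' : Fin (2 * m))) : ℤ) + (q (i + (r' : Fin (2 * m)) + 1) : ℤ)) := by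
          rw [h1] at hp'
          linarith [hp', hq', hsum_eq]
        have hS := mul_left_cancel₀ hd hkey
        rw [hidxr'] at hS
        exact_mod_cast hS
      have hall : ∀ l, p l + p (l + 1) = q l + q (l + 1) := by
        intro l
        by_cases hc2 : rep l = rep i'
        · have hsb : sameBlock P l i' := hrep_same l i' hc2
          have e1 : p l + p (l + 1) = p i' + p (i' + 1) := (hpc.2 l i').mpr hsb
          have e2 : q l + q (l + 1) = q i' + q (i' + 1) := (hqc.2 l i').mpr hsb
          rw [e1, e2, hsi']
        · have hmemE : rep l ∈ E :=
            Finset.mem_erase.mpr ⟨hc2, Finset.mem_image_of_mem rep (Finset.mem_univ _)⟩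
          calc p l + p (l + 1) = p (rep l) + p (rep l + 1) := hsp l
            _ = q (rep l) + q (rep l + 1) := h2 _ hmemE
            _ = q l + q (l + 1) := (hsq l).symm
      exact tele_aux p q i h1 hall
    have hfin : M.Finite := Set.Finite.of_finite_image (Set.toFinite _) hinj
    refine ⟨hfin, ?_⟩
    have hEcard : E.card ≤ m - 1 := by
      have h : E.card = R.card - 1 := Finset.card_erase_of_mem
        (Finset.mem_image_of_mem rep (Finset.mem_univ i'))
      omega
    calc M.ncard = (f '' M).ncard := (Set.ncard_image_of_injOn hinj).symm
      _ ≤ (Set.univ : Set (Fin (n + 1) × (E → Fin (2 * n + 1)))).ncard :=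
          Set.ncard_le_ncard (Set.subset_univ _) Set.finite_univ
      _ = Fintype.card (Fin (n + 1) × (E → Fin (2 * n + 1))) := by
          rw [Set.ncard_univ, Nat.card_eq_fintype_card]
      _ = (n + 1) * (2 * n + 1) ^ (E.card) := by
          rw [Fintype.card_prod, Fintype.card_fun, Fintype.card_fin, Fintype.card_fin,
            Fintype.card_coe]
      _ ≤ (n + 1) * (2 * n + 1) ^ (m - 1) :=
          Nat.mul_le_mul_left _ (Nat.pow_le_pow_right (by omega) hEcard)
  -- the two branches
  set MA : ℕ → Set (Fin (2 * m) → ℕ) := fun n =>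
    {p | p ∈ consistentSet (2 * m) n P ∧ p i = p j ∧ p (i + 1) = p (j + 1)} with hMAdef
  set MB : ℕ → Set (Fin (2 * m) → ℕ) := fun n =>
    {p | p ∈ consistentSet (2 * m) n P ∧ p i = p (j + 1) ∧ p (i + 1) = p j} with hMBdef
  have hrelA : ∀ n, ∀ p ∈ MA n, ((-1 : ℤ) ^ t - 1) * (p i : ℤ) =
      ∑ r ∈ Finset.range t, (-1 : ℤ) ^ (r + 1) *
        ((p (i + (r : Fin (2 * m))) : ℤ) + (p (i + (r : Fin (2 * m)) + 1) : ℤ)) := by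
    intro n p hp
    have h := altsum_aux p i t
    rw [hidxt, ← hp.2.1] at h
    linear_combination h
  have hrelB : ∀ n, ∀ p ∈ MB n, (1 + (-1 : ℤ) ^ t) * (p i : ℤ) =
      ∑ r ∈ Finset.range t, ((if r = 0 then (-1 : ℤ) ^ t else 0) - (-1 : ℤ) ^ (r + 1)) *
        ((p (i + (r : Fin (2 * m))) : ℤ) + (p (i + (r : Fin (2 * m)) + 1) : ℤ)) := by
    intro n p hp
    have h := altsum_aux p i t
    rw [hidxt, ← hp.2.2] at h
    have hidx0 : i + ((0 : ℕ) : Fin (2 * m)) = i := by simp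
    have hsplit : ∑ r ∈ Finset.range t, ((if r = 0 then (-1 : ℤ) ^ t else 0) - (-1 : ℤ) ^ (r + 1)) *
        ((p (i + (r : Fin (2 * m))) : ℤ) + (p (i + (r : Fin (2 * m)) + 1) : ℤ)) =
        (-1 : ℤ) ^ t * ((p i : ℤ) + (p (i + 1) : ℤ)) -
        ∑ r ∈ Finset.range t, (-1 : ℤ) ^ (r + 1) *
          ((p (i + (r : Fin (2 * m))) : ℤ) + (p (i + (r : Fin (2 * m)) + 1) : ℤ)) := by
      simp only [sub_mul]
      rw [Finset.sum_sub_distrib]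
      congr 1
      have hite : ∀ r ∈ Finset.range t, (if r = 0 then (-1 : ℤ) ^ t else 0) *
          ((p (i + (r : Fin (2 * m))) : ℤ) + (p (i + (r : Fin (2 * m)) + 1) : ℤ)) =
          if r = 0 then (-1 : ℤ) ^ t * ((p (i + (r : Fin (2 * m))) : ℤ) +
            (p (i + (r : Fin (2 * m)) + 1) : ℤ)) else 0 := by
        intro r _
        split <;> simp
      rw [Finset.sum_congr rfl hite, Finset.sum_ite_eq' (Finset.range t) 0,
        if_pos (Finset.mem_range.mpr ht1), hidx0]
    rw [hsplit]
    linear_combination (-1 : ℤ) * h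
  have hdA : ((-1 : ℤ) ^ (r' + 1)) ≠ 0 := by
    intro h
    exact absurd h (pow_ne_zero _ (by norm_num))
  have hdB : ((if r' = 0 then (-1 : ℤ) ^ t else 0) - (-1 : ℤ) ^ (r' + 1)) ≠ 0 := by
    rw [if_neg (by omega)]
    intro h
    have : (-1 : ℤ) ^ (r' + 1) = 0 := by linarith
    exact absurd this (pow_ne_zero _ (by norm_num))
  have hcountA : ∀ n, (MA n).Finite ∧ (MA n).ncard ≤ (n + 1) * (2 * n + 1) ^ (m - 1) :=
    fun n => count n (MA n) ((-1 : ℤ) ^ t - 1) (fun r => (-1 : ℤ) ^ (r + 1))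
      (fun p hp => hp.1) (hrelA n) hdA
  have hcountB : ∀ n, (MB n).Finite ∧ (MB n).ncard ≤ (n + 1) * (2 * n + 1) ^ (m - 1) :=
    fun n => count n (MB n) (1 + (-1 : ℤ) ^ t)
      (fun r => (if r = 0 then (-1 : ℤ) ^ t else 0) - (-1 : ℤ) ^ (r + 1))
      (fun p hp => hp.1) (hrelB n) hdB
  have hunion : ∀ n, matchedSet (2 * m) n P i j = MA n ∪ MB n := by
    intro n
    ext p
    simp only [matchedSet, hMAdef, hMBdef, Set.mem_setOf_eq, Set.mem_union]
    tauto
  have hbound : ∀ n : ℕ, (matchedSet (2 * m) n P i j).ncard ≤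
      2 * ((n + 1) * (2 * n + 1) ^ (m - 1)) := by
    intro n
    rw [hunion n]
    calc (MA n ∪ MB n).ncard ≤ (MA n).ncard + (MB n).ncard := Set.ncard_union_le _ _
      _ ≤ (n + 1) * (2 * n + 1) ^ (m - 1) + (n + 1) * (2 * n + 1) ^ (m - 1) :=
          Nat.add_le_add (hcountA n).2 (hcountB n).2
      _ = 2 * ((n + 1) * (2 * n + 1) ^ (m - 1)) := by ring
  have h0 : (matchedSet (2 * m) 0 P i j).ncard = 0 := by
    have he : matchedSet (2 * m) 0 P i j = ∅ := by
      ext p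
      simp only [matchedSet, consistentSet, Set.mem_setOf_eq, Set.mem_empty_iff_false, iff_false]
      rintro ⟨⟨h1, -⟩, -⟩
      have := h1 i
      omega
    rw [he, Set.ncard_empty]
  have hboundNat : ∀ n : ℕ, 1 ≤ n → (matchedSet (2 * m) n P i j).ncard ≤ 4 * 3 ^ (m - 1) * n ^ m := by
    intro n hn
    have h1 := hbound n
    have h2 : (n + 1) * (2 * n + 1) ^ (m - 1) ≤ (2 * n) * (3 * n) ^ (m - 1) :=
      Nat.mul_le_mul (by omega) (Nat.pow_le_pow_left (by omega) _)
    have h3 : (2 * n) * (3 * n) ^ (m - 1) = 2 * 3 ^ (m - 1) * (n * n ^ (m - 1)) := by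
      rw [mul_pow]; ring
    have h4 : n * n ^ (m - 1) = n ^ m := by
      rw [← pow_succ']
      congr 1
      omega
    calc (matchedSet (2 * m) n P i j).ncard ≤ 2 * ((n + 1) * (2 * n + 1) ^ (m - 1)) := h1
      _ ≤ 2 * ((2 * n) * (3 * n) ^ (m - 1)) := Nat.mul_le_mul_left _ h2
      _ = 4 * 3 ^ (m - 1) * n ^ m := by rw [h3, h4]; ring
  have hboundR : ∀ n : ℕ, ((matchedSet (2 * m) n P i j).ncard : ℝ) ≤
      (4 * 3 ^ (m - 1) : ℝ) * (n : ℝ) ^ m := by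
    intro n
    rcases Nat.eq_zero_or_pos n with rfl | hn
    · rw [h0]
      simp [zero_pow (by omega : m ≠ 0)]
    · have := hboundNat n hn
      calc ((matchedSet (2 * m) n P i j).ncard : ℝ) ≤ ((4 * 3 ^ (m - 1) * n ^ m : ℕ) : ℝ) := by
            exact_mod_cast this
        _ = (4 * 3 ^ (m - 1) : ℝ) * (n : ℝ) ^ m := by push_cast; ring
  constructor
  · exact ⟨(4 * 3 ^ (m - 1) : ℝ), hboundR⟩
  · apply squeeze_zero' (g := fun n : ℕ => (4 * 3 ^ (m - 1) : ℝ) / n)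
    · filter_upwards with n
      positivity
    · filter_upwards [eventually_ge_atTop 1] with n hn
      have hnpos : (0 : ℝ) < (n : ℝ) := by exact_mod_cast hn
      have hpow : (0 : ℝ) < (n : ℝ) ^ (m + 1) := by positivity
      rw [div_le_div_iff₀ hpow hnpos]
      calc ((matchedSet (2 * m) n P i j).ncard : ℝ) * (n : ℝ) ≤
          ((4 * 3 ^ (m - 1) : ℝ) * (n : ℝ) ^ m) * (n : ℝ) :=
            mul_le_mul_of_nonneg_right (hboundR n) (le_of_lt hnpos)
        _ = (4 * 3 ^ (m - 1) : ℝ) * (n : ℝ) ^ (m + 1) := by ring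
    · exact tendsto_const_div_atTop_nhds_zero_nat _
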